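/- arXiv:1110.0563 — 6 statements merged into one kernel-verified Lean document; each statement's English description precedes it below -/
import Mathlib

section
/- Let Γ be a finite bipartite graph (possibly with multiple edges) on vertex classes A and B with |A| = |B| = n ≥ 2. If Γ has exactly one perfect matching and no isolated vertices, then Γ has a vertex of degree 1 (a leaf). -/
/-- A finite bipartite multigraph on classes of size n ≥ 2 with a unique perfect
matching and no isolated vertices has a vertex of degree 1. Edges are given by a
finite type `E` with endpoint maps `ea : E → Fin n` (to class A) and
`eb : E → Fin n` (to class B); a perfect matching assigns to each vertex of A an
incident edge such that the B-endpoints form a bijection. -/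
theorem stmt_8 {n : ℕ} (hn : 2 ≤ n) (E : Type) [Fintype E] [DecidableEq E]
    (ea eb : E → Fin n)
    (hpm : ∃! f : Fin n → E, (∀ a, ea (f a) = a) ∧ Function.Bijective (eb ∘ f))
    (hisoA : ∀ a, ∃ e, ea e = a) (hisoB : ∀ b, ∃ e, eb e = b) :
    (∃ a, (Finset.univ.filter fun e => ea e = a).card = 1) ∨
    (∃ b, (Finset.univ.filter fun e => eb e = b).card = 1) := by
  left
  by_contra hdeg
  push_neg at hdeg
  obtain ⟨f, ⟨hf1, hf2⟩, huniq⟩ := hpm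
  have hg : ∀ a, ∃ e, ea e = a ∧ e ≠ f a := by
    intro a
    have hmem : f a ∈ Finset.univ.filter fun e => ea e = a := by simp [hf1]
    have h1 : 1 ≤ (Finset.univ.filter fun e => ea e = a).card :=
      Finset.card_pos.mpr ⟨f a, hmem⟩
    have h2 : 1 < (Finset.univ.filter fun e => ea e = a).card := by
      have := hdeg a; omega
    obtain ⟨e, he, hne⟩ := Finset.exists_mem_ne h2 (f a)
    exact ⟨e, by simpa using he, hne⟩
  choose g hg1 hg2 using hg
  set σ : Equiv.Perm (Fin n) := Equiv.ofBijective _ hf2 with hσ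
  have hσ_apply : ∀ a, σ a = eb (f a) := fun a => rfl
  set h : Fin n → Fin n := fun a => σ.symm (eb (g a)) with hh
  have key : ∀ a, eb (f (h a)) = eb (g a) := by
    intro a
    have := σ.apply_symm_apply (eb (g a))
    simpa [hσ_apply] using this
  obtain ⟨a0⟩ : Nonempty (Fin n) := ⟨⟨0, by omega⟩⟩
  have hni : ¬ Function.Injective (fun k : Fin (n+1) => h^[(k : ℕ)] a0) := by
    intro hinj
    have := Fintype.card_le_of_injective _ hinj
    simp at this
  rw [Function.not_injective_iff] at hni
  obtain ⟨i, j, hij, hneij⟩ := hni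
  obtain ⟨p, q, hpq, heq⟩ : ∃ p q : ℕ, p < q ∧ h^[p] a0 = h^[q] a0 := by
    rcases lt_or_gt_of_ne (show (i : ℕ) ≠ (j : ℕ) from
        fun hc => hneij (Fin.ext hc)) with hlt | hlt
    · exact ⟨i, j, hlt, hij⟩
    · exact ⟨j, i, hlt, hij.symm⟩
  set m := q - p with hm
  have hm0 : 0 < m := by omega
  set c := h^[p] a0 with hc
  have hcyc : h^[m] c = c := by
    rw [hc, ← Function.iterate_add_apply]
    have hmp : m + p = q := by omega
    rw [hmp, ← heq]
  set S : Finset (Fin n) := (Finset.range m).image (fun k => h^[k] c) with hS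
  have hcS : c ∈ S := Finset.mem_image.mpr ⟨0, Finset.mem_range.mpr hm0, rfl⟩
  set τ : Fin n → Fin n := fun a => if a ∈ S then h a else a with hτ
  have hτsurj : Function.Surjective τ := by
    intro b
    by_cases hb : b ∈ S
    · obtain ⟨k, hk, rfl⟩ := Finset.mem_image.mp hb
      rw [Finset.mem_range] at hk
      rcases Nat.eq_zero_or_pos k with rfl | hk0
      · refine ⟨h^[m-1] c, ?_⟩
        have hmem : h^[m-1] c ∈ S :=
          Finset.mem_image.mpr ⟨m-1, Finset.mem_range.mpr (by omega), rfl⟩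
        simp only [hτ, if_pos hmem]
        rw [← Function.iterate_succ_apply' h (m-1) c]
        have hms : (m - 1).succ = m := by omega
        rw [hms, hcyc]
        simp
      · refine ⟨h^[k-1] c, ?_⟩
        have hmem : h^[k-1] c ∈ S :=
          Finset.mem_image.mpr ⟨k-1, Finset.mem_range.mpr (by omega), rfl⟩
        simp only [hτ, if_pos hmem]
        rw [← Function.iterate_succ_apply' h (k-1) c]
        congr 1
        omega
    · exact ⟨b, by simp [hτ, hb]⟩
  have hτbij : Function.Bijective τ := Finite.surjective_iff_bijective.mp hτsurj
  set f' : Fin n → E := fun a => if a ∈ S then g a else f a with hf'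
  have hf'1 : ∀ a, ea (f' a) = a := by
    intro a; by_cases ha : a ∈ S <;> simp [hf', ha, hg1, hf1]
  have hcomp : eb ∘ f' = (eb ∘ f) ∘ τ := by
    funext a
    by_cases ha : a ∈ S <;> simp [hf', hτ, ha, key]
  have hf'2 : Function.Bijective (eb ∘ f') := by
    rw [hcomp]; exact hf2.comp hτbij
  have heqf : f' = f := huniq f' ⟨hf'1, hf'2⟩
  have hcontra : f' c = f c := by rw [heqf]
  simp only [hf', if_pos hcS] at hcontra
  exact hg2 c hcontra
end

section
/- Let Γ be a finite bipartite graph on classes A and B with |A| = |B| = n ≥ 1 admitting a perfect matching μ. If every vertex of Γ has degree at least 2, then Γ admits a second perfect matching distinct from μ. (Proof idea: orient matched edges from A to B and unmatched edges from B to A; every vertex lies on a walk leading to a directed cycle, and swapping the matching along that cycle yields a new perfect matching.) -/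
/-- A finite bipartite graph on classes of size n ≥ 1 admitting a perfect
matching, all of whose vertices have degree at least 2, admits a second perfect
matching. Adjacency between class A and class B is `Adj : Fin n → Fin n → Prop`,
and a perfect matching is a bijection A → B all of whose pairs are edges. -/
theorem stmt_9 {n : ℕ} (hn : 1 ≤ n) (Adj : Fin n → Fin n → Prop)
    [∀ a b, Decidable (Adj a b)]
    (μ : Fin n ≃ Fin n) (hμ : ∀ a, Adj a (μ a))
    (hdegA : ∀ a, 2 ≤ (Finset.univ.filter fun b => Adj a b).card)
    (hdegB : ∀ b, 2 ≤ (Finset.univ.filter fun a => Adj a b).card) :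
    ∃ ν : Fin n ≃ Fin n, ν ≠ μ ∧ ∀ a, Adj a (ν a) := by
  classical
  have hg : ∀ a : Fin n, ∃ b, Adj a b ∧ b ≠ μ a := by
    intro a
    obtain ⟨b, hb, hne⟩ := Finset.exists_mem_ne
      (lt_of_lt_of_le one_lt_two (hdegA a)) (μ a)
    exact ⟨b, (Finset.mem_filter.mp hb).2, hne⟩
  choose g hgadj hgne using hg
  set f : Fin n → Fin n := fun a => μ.symm (g a) with hfdef
  -- find a periodic point of f
  obtain ⟨a, k, hk1, hk⟩ : ∃ (a : Fin n) (k : ℕ), 1 ≤ k ∧ f^[k] a = a := by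
    obtain ⟨i, j, hne, heq⟩ :=
      Fintype.exists_ne_map_eq_of_card_lt
        (fun m : Fin (n+1) => f^[(m : ℕ)] ⟨0, hn⟩) (by simp)
    have hne' : (i : ℕ) ≠ (j : ℕ) := fun h => hne (Fin.ext h)
    rcases Nat.lt_or_ge (i : ℕ) (j : ℕ) with h | h
    · refine ⟨f^[(i : ℕ)] ⟨0, hn⟩, (j : ℕ) - i, by omega, ?_⟩
      rw [← Function.iterate_add_apply, Nat.sub_add_cancel h.le]
      exact heq.symm
    · have h' : (j : ℕ) < i := lt_of_le_of_ne h (Ne.symm hne')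
      refine ⟨f^[(j : ℕ)] ⟨0, hn⟩, (i : ℕ) - j, by omega, ?_⟩
      rw [← Function.iterate_add_apply, Nat.sub_add_cancel h'.le]
      exact heq
  set O : Finset (Fin n) := (Finset.range k).image (fun m => f^[m] a) with hO
  have hper : ∀ m, f^[m % k] a = f^[m] a := fun m =>
    (Function.IsPeriodicPt.iterate_mod_apply hk m)
  have hmem : ∀ m, f^[m] a ∈ O := fun m =>
    Finset.mem_image.mpr ⟨m % k, Finset.mem_range.mpr (Nat.mod_lt _ hk1), hper m⟩
  have hret : ∀ x ∈ O, f^[k-1] (f x) = x := by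
    intro x hx
    obtain ⟨p, -, rfl⟩ := Finset.mem_image.mp hx
    have h1 : f^[k-1] (f (f^[p] a)) = f^[(k-1)+(p+1)] a := by
      rw [← Function.iterate_succ_apply' f p a, ← Function.iterate_add_apply]
    have h2 : (k-1)+(p+1) = p + k := by omega
    rw [h1, h2, Function.iterate_add_apply, hk]
  have fO : ∀ x ∈ O, f x ∈ O := by
    intro x hx
    obtain ⟨p, -, rfl⟩ := Finset.mem_image.mp hx
    rw [← Function.iterate_succ_apply' f p a]
    exact hmem (p+1)
  set σ : Fin n → Fin n := fun x => if x ∈ O then f x else x with hσ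
  have hinj : Function.Injective σ := by
    intro x y hxy
    by_cases hx : x ∈ O <;> by_cases hy : y ∈ O
    · simp only [hσ, if_pos hx, if_pos hy] at hxy
      rw [← hret x hx, ← hret y hy, hxy]
    · simp only [hσ, if_pos hx, if_neg hy] at hxy
      exact absurd (hxy ▸ fO x hx) hy
    · simp only [hσ, if_neg hx, if_pos hy] at hxy
      exact absurd (hxy ▸ fO y hy) hx
    · simpa only [hσ, if_neg hx, if_neg hy] using hxy
  have hbij : Function.Bijective σ := Finite.injective_iff_bijective.mp hinj
  refine ⟨(Equiv.ofBijective σ hbij).trans μ, ?_, ?_⟩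
  · intro h
    have ha : a ∈ O := hmem 0
    have : μ (σ a) = μ a := by
      have := congrArg (fun e : Fin n ≃ Fin n => e a) h
      simpa using this
    rw [hσ] at this
    simp only [if_pos ha, hfdef] at this
    rw [Equiv.apply_symm_apply] at this
    exact hgne a this
  · intro x
    show Adj x (μ (σ x))
    by_cases hx : x ∈ O
    · simp only [hσ, if_pos hx, hfdef, Equiv.apply_symm_apply]
      exact hgadj x
    · simp only [hσ, if_neg hx]
      exact hμ x
end

section
/- Let A be an n × n matrix over ℤ with n ≥ 2 such that the permanent of (|A(i,j)|) equals 1. Then some row or some column of A contains exactly one nonzero entry, and that entry is ±1. -/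
/-- If an n × n integer matrix with n ≥ 2 has permanent of absolute values equal
to 1, then some row or some column contains exactly one nonzero entry, and that
entry is ±1. -/
theorem stmt_10 {n : ℕ} (hn : 2 ≤ n) (A : Matrix (Fin n) (Fin n) ℤ)
    (hper : ∑ σ : Equiv.Perm (Fin n), ∏ i, |A i (σ i)| = 1) :
    (∃ i j, (A i j = 1 ∨ A i j = -1) ∧ ∀ j', j' ≠ j → A i j' = 0) ∨
    (∃ i j, (A i j = 1 ∨ A i j = -1) ∧ ∀ i', i' ≠ i → A i' j = 0) := by
  classical
  -- find a permutation with nonzero (hence positive) term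
  obtain ⟨σ, -, hσ⟩ := Finset.exists_ne_zero_of_sum_ne_zero
    (s := (Finset.univ : Finset (Equiv.Perm (Fin n))))
    (f := fun σ => ∏ i, |A i (σ i)|) (by rw [hper]; norm_num)
  have hnz : ∀ i : Fin n, A i (σ i) ≠ 0 := by
    intro i hi
    exact hσ (Finset.prod_eq_zero (Finset.mem_univ i) (by simp [hi]))
  have hone : ∀ i ∈ (Finset.univ : Finset (Fin n)), (1:ℤ) ≤ |A i (σ i)| :=
    fun i _ => Int.one_le_abs (by simpa using hnz i)
  have honeprod : ∀ s : Finset (Fin n), (1:ℤ) ≤ ∏ j ∈ s, |A j (σ j)| := by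
    intro s
    calc (1:ℤ) = ∏ j ∈ s, 1 := by simp
    _ ≤ ∏ j ∈ s, |A j (σ j)| :=
      Finset.prod_le_prod (fun j _ => by norm_num) (fun j _ => hone j (Finset.mem_univ j))
  have hfac : ∀ i, |A i (σ i)| = 1 := by
    intro i
    have hle : |A i (σ i)| ≤ ∏ j, |A j (σ j)| := by
      rw [← Finset.mul_prod_erase Finset.univ _ (Finset.mem_univ i)]
      nlinarith [honeprod (Finset.univ.erase i), hone i (Finset.mem_univ i)]
    have hprodle : ∏ j, |A j (σ j)| ≤ 1 := by
      rw [← hper]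
      exact Finset.single_le_sum (f := fun τ : Equiv.Perm (Fin n) => ∏ j, |A j (τ j)|)
        (fun τ _ => Finset.prod_nonneg fun j _ => abs_nonneg _) (Finset.mem_univ σ)
    have := hone i (Finset.mem_univ i)
    omega
  by_cases hrow : ∃ i, ∀ j', j' ≠ σ i → A i j' = 0
  · obtain ⟨i, hi⟩ := hrow
    left
    refine ⟨i, σ i, ?_, hi⟩
    rcases (abs_eq (by norm_num : (0:ℤ) ≤ 1)).mp (hfac i) with h | h
    · exact Or.inl h
    · exact Or.inr h
  · exfalso
    push_neg at hrow
    choose f hf hf0 using hrow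
    set g : Fin n → Fin n := fun i => σ.symm (f i) with hg
    have hgσ : ∀ i, σ (g i) = f i := fun i => σ.apply_symm_apply (f i)
    -- find a periodic point
    obtain ⟨a, b, hab, heq⟩ :
        ∃ a b : ℕ, a ≠ b ∧ g^[a] (⟨0, by omega⟩ : Fin n) = g^[b] ⟨0, by omega⟩ :=
      Finite.exists_ne_map_eq_of_infinite (fun k : ℕ => g^[k] (⟨0, by omega⟩ : Fin n))
    wlog hlt : a < b generalizing a b
    · exact this b a hab.symm heq.symm (by omega)
    set x : Fin n := g^[a] (⟨0, by omega⟩ : Fin n) with hx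
    set p : ℕ := b - a with hp
    have hp1 : 1 ≤ p := by omega
    have hxp : g^[p] x = x := by
      rw [hx, ← Function.iterate_add_apply]
      rw [show p + a = b by omega]
      exact heq.symm
    set S : Set (Fin n) := Set.range (fun k : ℕ => g^[k] x) with hS
    have hxS : x ∈ S := ⟨0, rfl⟩
    have hmaps : Set.MapsTo g S S := by
      rintro y ⟨k, rfl⟩
      exact ⟨k + 1, by simp [Function.iterate_succ_apply']⟩
    have hsurj : Set.SurjOn g S S := by
      rintro y ⟨k, rfl⟩
      refine ⟨g^[k + p - 1] x, ⟨k + p - 1, rfl⟩, ?_⟩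
      show g (g^[k+p-1] x) = g^[k] x
      calc g (g^[k+p-1] x) = g^[k+p-1+1] x := (Function.iterate_succ_apply' g _ x).symm
        _ = g^[k+p] x := by rw [show k + p - 1 + 1 = k + p by omega]
        _ = g^[k] (g^[p] x) := Function.iterate_add_apply g k p x
        _ = g^[k] x := by rw [hxp]
    have hinj : Set.InjOn g S := by
      exact (((Set.toFinite S).surjOn_iff_bijOn_of_mapsTo hmaps).mp hsurj).2.1
    set c : Fin n → Fin n := fun y => if y ∈ S then g y else y with hc
    have hcinj : Function.Injective c := by
      intro y z h
      simp only [hc] at h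
      by_cases hy : y ∈ S <;> by_cases hz : z ∈ S <;> simp only [hy, hz, if_pos, if_neg,
        if_true, if_false] at h
      · exact hinj hy hz h
      · exact absurd (h ▸ hmaps hy) hz
      · exact absurd (h ▸ hmaps hz) hy
      · exact h
    set ce : Equiv.Perm (Fin n) := Equiv.ofBijective c (Finite.injective_iff_bijective.mp hcinj)
      with hce
    set τ : Equiv.Perm (Fin n) := ce.trans σ with hτ
    have hτapp : ∀ i, τ i = σ (c i) := fun i => rfl
    have hτS : ∀ i ∈ S, τ i = f i := by
      intro i hiS
      rw [hτapp, hc]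
      simp [hiS, hgσ]
    have hτn : ∀ i ∉ S, τ i = σ i := by
      intro i hiS
      rw [hτapp, hc]
      simp [hiS]
    have hne : σ ≠ τ := by
      intro h
      have : τ x = f x := hτS x hxS
      rw [← h] at this
      exact hf x this.symm
    have hτnz : ∀ i ∈ (Finset.univ : Finset (Fin n)), (1:ℤ) ≤ |A i (τ i)| := by
      intro i _
      by_cases hiS : i ∈ S
      · exact Int.one_le_abs (by simpa [hτS i hiS] using hf0 i)
      · rw [hτn i hiS, hfac i]
    have hτ1 : (1:ℤ) ≤ ∏ i, |A i (τ i)| := by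
      calc (1:ℤ) = ∏ i : Fin n, 1 := by simp
      _ ≤ ∏ i, |A i (τ i)| := Finset.prod_le_prod (fun j _ => by norm_num) hτnz
    have hσ1 : (1:ℤ) ≤ ∏ i, |A i (σ i)| := honeprod Finset.univ
    have hsum : ∏ i, |A i (σ i)| + ∏ i, |A i (τ i)| ≤
        ∑ ρ : Equiv.Perm (Fin n), ∏ i, |A i (ρ i)| := by
      have h := Finset.sum_le_sum_of_subset_of_nonneg
        (f := fun ρ : Equiv.Perm (Fin n) => ∏ i, |A i (ρ i)|)
        (Finset.subset_univ ({σ, τ} : Finset (Equiv.Perm (Fin n))))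
        (fun ρ _ _ => Finset.prod_nonneg fun j _ => abs_nonneg _)
      rwa [Finset.sum_pair hne] at h
    rw [hper] at hsum
    omega
end

section
/- Let A be an n × n real matrix with det A ≠ 0 and |det A| equal to the permanent of (|A(i,j)|). Then for every choice of d₁, …, dₙ ∈ {−1, 0, +1}, not all zero, the matrix M with M(i,j) = dᵢ · A(i,j) has a nonzero column all of whose nonzero entries have the same sign (all positive or all negative). -/
private lemma prodNegSign12 {α : Type*} (T : Finset α) (x : α → ℝ) :
    (∀ i ∈ T, x i < 0) → 0 < (-1 : ℝ) ^ T.card * ∏ i ∈ T, x i := by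
  induction T using Finset.cons_induction with
  | empty => simp
  | cons a s ha ih =>
    intro hx
    rw [Finset.prod_cons, Finset.card_cons, pow_succ]
    have h1 := hx a (Finset.mem_cons_self a s)
    have h2 := ih (fun i hi => hx i (Finset.mem_cons.2 (Or.inr hi)))
    nlinarith

private lemma existsCycleList12 {n : ℕ} (d : Fin n → ℝ) (f : Fin n → Fin n)
    (hfS : ∀ i, d i ≠ 0 → d (f i) ≠ 0)
    (hfne : ∀ i, d i ≠ 0 → f i ≠ i)
    (i₀ : Fin n) (hi₀ : d i₀ ≠ 0) :
    ∃ (L : List (Fin n)), L.Nodup ∧ 2 ≤ L.length ∧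
      (∀ i ∈ L, d i ≠ 0) ∧
      (∀ i ∈ L, L.formPerm i = f i) ∧
      (∀ i ∈ L, f i ∈ L) := by
  have hiter : ∀ k, d (f^[k] i₀) ≠ 0 := by
    intro k
    induction k with
    | zero => simpa using hi₀
    | succ k ih => rw [Function.iterate_succ_apply']; exact hfS _ ih
  have hper : ∃ m, 0 < m ∧ ∃ y, f^[m] y = y ∧ d y ≠ 0 := by
    obtain ⟨a, b, hab, heq⟩ := Fintype.exists_ne_map_eq_of_card_lt
      (fun k : Fin (n+1) => f^[(k : ℕ)] i₀) (by simp)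
    wlog hlt : (a : ℕ) < (b : ℕ) generalizing a b
    · exact this b a hab.symm heq.symm (by have := Fin.val_ne_of_ne hab; omega)
    refine ⟨(b : ℕ) - a, by omega, f^[(a : ℕ)] i₀, ?_, hiter a⟩
    rw [← Function.iterate_add_apply]
    have h' : (b : ℕ) - a + a = b := by omega
    rw [h']
    exact heq.symm
  obtain ⟨m, hm, y, hym, hy⟩ := hper
  have hpy : ∃ m, 0 < m ∧ f^[m] y = y := ⟨m, hm, hym⟩
  set k := Nat.find hpy with hkdef
  have hspec := Nat.find_spec hpy
  rw [← hkdef] at hspec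
  obtain ⟨hk0, hky⟩ := hspec
  have hmin : ∀ j, j < k → ¬(0 < j ∧ f^[j] y = y) := fun j hj => Nat.find_min hpy hj
  have hySk : ∀ p, d (f^[p] y) ≠ 0 := by
    intro p
    induction p with
    | zero => simpa using hy
    | succ p ih => rw [Function.iterate_succ_apply']; exact hfS _ ih
  have hk2 : 2 ≤ k := by
    rcases Nat.lt_or_ge k 2 with h | h
    · have h1 : k = 1 := by omega
      rw [h1] at hky
      exact absurd (by simpa using hky) (hfne y hy)
    · exact h
  set L : List (Fin n) := (List.range k).map (fun p => f^[p] y) with hL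
  have hlen : L.length = k := by simp [hL]
  have key : ∀ p q, p < q → q < k → f^[p] y ≠ f^[q] y := by
    intro p q hpq hq hpqe
    have h2 : f^[(k - q) + p] y = y := by
      rw [Function.iterate_add_apply, hpqe, ← Function.iterate_add_apply]
      have h3 : k - q + q = k := by omega
      rw [h3, hky]
    exact hmin _ (by omega) ⟨by omega, h2⟩
  have hnodup : L.Nodup := by
    refine List.Nodup.map_on ?_ (List.nodup_range (n := k))
    intro p hp q hq hpq
    rw [List.mem_range] at hp hq
    by_contra hne
    rcases Nat.lt_or_ge p q with h | h
    · exact key p q h hq hpq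
    · exact key q p (by omega) hp hpq.symm
  refine ⟨L, hnodup, by omega, ?_, ?_, ?_⟩
  · intro i hi
    obtain ⟨p, hp, rfl⟩ := List.mem_map.mp hi
    exact hySk p
  · intro i hi
    obtain ⟨p, hp, rfl⟩ := List.mem_map.mp hi
    rw [List.mem_range] at hp
    have hgp : L[p]'(by omega) = f^[p] y := by simp [hL]
    have hpe : f (f^[p] y) = f^[p+1] y := (Function.iterate_succ_apply' f p y).symm
    rw [← hgp, List.formPerm_apply_getElem _ hnodup p (by omega)]
    simp only [hL, List.getElem_map, List.getElem_range, List.length_map, List.length_range]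
    rcases Nat.lt_or_ge (p+1) k with h | h
    · rw [Nat.mod_eq_of_lt h]
      exact hpe.symm
    · have h1 : p + 1 = k := by omega
      rw [h1, Nat.mod_self, hpe, h1, hky]
      simp
  · intro i hi
    obtain ⟨p, hp, rfl⟩ := List.mem_map.mp hi
    rw [List.mem_range] at hp
    have hpe : f (f^[p] y) = f^[p+1] y := (Function.iterate_succ_apply' f p y).symm
    rw [hpe]
    rcases Nat.lt_or_ge (p+1) k with h | h
    · exact List.mem_map.mpr ⟨p+1, List.mem_range.mpr h, rfl⟩
    · have h1 : p + 1 = k := by omega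
      rw [h1, hky]
      exact List.mem_map.mpr ⟨0, List.mem_range.mpr (by omega), rfl⟩

/-- If a real matrix has nonzero determinant whose absolute value equals the
permanent of the matrix of absolute values, then for any signs d i ∈ {-1,0,1},
not all zero, the matrix (d i * A i j) has a nonzero column all of whose nonzero
entries have the same sign. -/
theorem stmt_12 {n : ℕ} (A : Matrix (Fin n) (Fin n) ℝ)
    (hdet : A.det ≠ 0)
    (hper : |A.det| = ∑ σ : Equiv.Perm (Fin n), ∏ i, |A i (σ i)|)
    (d : Fin n → ℝ) (hd : ∀ i, d i = -1 ∨ d i = 0 ∨ d i = 1)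
    (hd0 : ∃ i, d i ≠ 0) :
    ∃ j, (∃ i, d i * A i j ≠ 0) ∧
      ((∀ i, 0 ≤ d i * A i j) ∨ (∀ i, d i * A i j ≤ 0)) := by
  by_contra hcon
  push_neg at hcon
  -- hcon : ∀ j, (∃ i, d i * A i j ≠ 0) → (∃ i, d i * A i j < 0) ∧ (∃ i, 0 < d i * A i j)
  set t : Equiv.Perm (Fin n) → ℝ :=
    fun σ => ((Equiv.Perm.sign σ : ℤ) : ℝ) * ∏ i, A i (σ i) with ht
  have hdetA : A.det = ∑ σ : Equiv.Perm (Fin n), t σ := by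
    rw [← Matrix.det_transpose A, Matrix.det_apply']
    simp [ht, Matrix.transpose_apply]
  have habs : ∀ σ : Equiv.Perm (Fin n), |t σ| = ∏ i, |A i (σ i)| := by
    intro σ
    rw [ht]
    rw [abs_mul, Finset.abs_prod]
    rcases Int.units_eq_one_or (Equiv.Perm.sign σ) with h | h <;> simp [h]
  have hper' : |∑ σ : Equiv.Perm (Fin n), t σ| = ∑ σ : Equiv.Perm (Fin n), |t σ| := by
    rw [← hdetA, hper]
    exact Finset.sum_congr rfl fun σ _ => (habs σ).symm
  have hsame : ∀ σ τ : Equiv.Perm (Fin n), t σ ≠ 0 → t τ ≠ 0 → 0 < t σ * t τ := by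
    rcases hdet.lt_or_gt with hlt | hlt
    · have h0 : ∑ σ : Equiv.Perm (Fin n), (|t σ| + t σ) = 0 := by
        rw [Finset.sum_add_distrib, ← hper', ← hdetA, abs_of_neg hlt]; ring
      have hz : ∀ σ : Equiv.Perm (Fin n), t σ ≤ 0 := by
        intro σ
        have := (Finset.sum_eq_zero_iff_of_nonneg
          (fun σ _ => by linarith [neg_abs_le (t σ)])).mp h0 σ (Finset.mem_univ σ)
        have h2 := abs_nonneg (t σ)
        linarith
      intro σ τ hσ hτ
      exact mul_pos_of_neg_of_neg ((hz σ).lt_of_ne hσ) ((hz τ).lt_of_ne hτ)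
    · have h0 : ∑ σ : Equiv.Perm (Fin n), (|t σ| - t σ) = 0 := by
        rw [Finset.sum_sub_distrib, ← hper', ← hdetA, abs_of_pos hlt]; ring
      have hz : ∀ σ : Equiv.Perm (Fin n), 0 ≤ t σ := by
        intro σ
        have := (Finset.sum_eq_zero_iff_of_nonneg
          (fun σ _ => by linarith [le_abs_self (t σ)])).mp h0 σ (Finset.mem_univ σ)
        have h2 := abs_nonneg (t σ)
        linarith
      intro σ τ hσ hτ
      exact mul_pos ((hz σ).lt_of_ne (Ne.symm hσ)) ((hz τ).lt_of_ne (Ne.symm hτ))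
  have hex0 : ∃ σ : Equiv.Perm (Fin n), ∏ i, A i (σ i) ≠ 0 := by
    by_contra h
    push_neg at h
    exact hdet (hdetA.trans (Finset.sum_eq_zero fun σ _ => by rw [ht]; simp [h σ]))
  obtain ⟨σ₀, hσ₀⟩ := hex0
  have hAne : ∀ i, A i (σ₀ i) ≠ 0 := by
    intro i h
    exact hσ₀ (Finset.prod_eq_zero (Finset.mem_univ i) h)
  have hdd : ∀ i, d i ≠ 0 → d i * d i = 1 := by
    intro i hi
    rcases hd i with h | h | h
    · rw [h]; norm_num
    · exact absurd h hi
    · rw [h]; norm_num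
  -- a "conflict" function
  have hex : ∀ i, ∃ i', d i ≠ 0 →
      (d i' * A i' (σ₀ i)) * (d i * A i (σ₀ i)) < 0 := by
    intro i
    by_cases hi : d i ≠ 0
    · have hMi : d i * A i (σ₀ i) ≠ 0 := mul_ne_zero hi (hAne i)
      obtain ⟨hneg, hpos⟩ := hcon (σ₀ i) ⟨i, hMi⟩
      rcases hMi.lt_or_gt with h | h
      · obtain ⟨i', hi'⟩ := hpos
        exact ⟨i', fun _ => mul_neg_of_pos_of_neg hi' h⟩
      · obtain ⟨i', hi'⟩ := hneg
        exact ⟨i', fun _ => mul_neg_of_neg_of_pos hi' h⟩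
    · exact ⟨i, fun h => absurd h hi⟩
  choose f hf using hex
  have hfS : ∀ i, d i ≠ 0 → d (f i) ≠ 0 := by
    intro i hi h0
    simpa [h0] using hf i hi
  have hfA : ∀ i, d i ≠ 0 → A (f i) (σ₀ i) ≠ 0 := by
    intro i hi h0
    simpa [h0] using hf i hi
  have hfne : ∀ i, d i ≠ 0 → f i ≠ i := by
    intro i hi h0
    have := hf i hi
    rw [h0] at this
    nlinarith
  obtain ⟨i₀, hi₀⟩ := hd0
  obtain ⟨L, hnodup, hL2, hdL, hcL, hfL⟩ := existsCycleList12 d f hfS hfne i₀ hi₀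
  set c : Equiv.Perm (Fin n) := L.formPerm with hc
  set T : Finset (Fin n) := L.toFinset with hT
  have hcne : ∀ x : Fin n, L ≠ [x] := by
    intro x h
    rw [h] at hL2
    simp at hL2
  have hsupp : c.support = T := List.support_formPerm_of_nodup L hnodup hcne
  have hcycle : c.IsCycle := List.isCycle_formPerm hnodup hL2
  have hcardT : T.card = L.length := List.toFinset_card_of_nodup hnodup
  have hsignc : Equiv.Perm.sign c = -(-1) ^ L.length := by
    rw [hcycle.sign, hsupp, hcardT]
  -- membership facts on T
  have hdT : ∀ i ∈ T, d i ≠ 0 := fun i hi => hdL i (List.mem_toFinset.mp hi)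
  have hcT : ∀ i ∈ T, c i = f i := fun i hi => hcL i (List.mem_toFinset.mp hi)
  have hcmemT : ∀ i ∈ T, c i ∈ T := fun i hi =>
    List.mem_toFinset.mpr (List.formPerm_apply_mem_of_mem (List.mem_toFinset.mp hi))
  have hcinvT : ∀ i ∈ T, c⁻¹ i ∈ T := by
    intro i hi
    refine List.mem_toFinset.mpr (List.mem_of_formPerm_apply_mem ?_)
    rw [show L.formPerm (c⁻¹ i) = i from by rw [← hc]; exact c.apply_symm_apply i]
    exact List.mem_toFinset.mp hi
  -- reindexing products over T along c
  have hre : ∀ g : Fin n → ℝ, ∏ i ∈ T, g i = ∏ i ∈ T, g (c i) := by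
    intro g
    refine Finset.prod_bij' (fun a _ => c⁻¹ a) (fun a _ => c a)
      (fun a ha => hcinvT a ha) (fun a ha => hcmemT a ha)
      (fun a _ => c.apply_symm_apply a) (fun a _ => c.symm_apply_apply a)
      (fun a _ => by rw [show c (c⁻¹ a) = a from c.apply_symm_apply a])
  -- the new permutation
  set τ : Equiv.Perm (Fin n) := σ₀ * c⁻¹ with hτ
  have hτapp : ∀ i, τ i = σ₀ (c⁻¹ i) := fun i => rfl
  -- products
  set Pout : ℝ := ∏ i ∈ Tᶜ, A i (σ₀ i) with hPout
  set Pin : ℝ := ∏ i ∈ T, A i (σ₀ i) with hPin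
  set Pin' : ℝ := ∏ i ∈ T, A (f i) (σ₀ i) with hPin'
  have hP : ∏ i, A i (σ₀ i) = Pin * Pout := (Finset.prod_mul_prod_compl T _).symm
  have hP' : ∏ i, A i (τ i) = Pin' * Pout := by
    rw [← Finset.prod_mul_prod_compl T (fun i => A i (τ i))]
    congr 1
    · rw [hre (fun i => A i (τ i))]
      refine Finset.prod_congr rfl fun i hi => ?_
      rw [hτapp, show c⁻¹ (c i) = i from c.symm_apply_apply i, hcT i hi]
    · refine Finset.prod_congr rfl fun i hi => ?_
      have hiL : i ∉ L := fun h => (Finset.mem_compl.mp hi) (List.mem_toFinset.mpr h)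
      have hci : c i = i := List.formPerm_apply_of_notMem hiL
      rw [hτapp, show c⁻¹ i = i from by rw [Equiv.Perm.inv_eq_iff_eq, hci]]
  have hPoutne : Pout ≠ 0 := Finset.prod_ne_zero_iff.mpr fun i _ => hAne i
  have hPin'ne : Pin' ≠ 0 := Finset.prod_ne_zero_iff.mpr fun i hi => hfA i (hdT i hi)
  -- nonzeroness of the two terms
  have hsne : ∀ σ : Equiv.Perm (Fin n), ((Equiv.Perm.sign σ : ℤ) : ℝ) ≠ 0 := by
    intro σ
    rcases Int.units_eq_one_or (Equiv.Perm.sign σ) with h | h <;> simp [h]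
  have htσ₀ : t σ₀ ≠ 0 := mul_ne_zero (hsne σ₀) hσ₀
  have htτ : t τ ≠ 0 := by
    rw [ht]
    exact mul_ne_zero (hsne τ) (by rw [hP']; exact mul_ne_zero hPin'ne hPoutne)
  have hpos := hsame σ₀ τ htσ₀ htτ
  -- now compute the sign of t σ₀ * t τ
  set sσ : ℝ := ((Equiv.Perm.sign σ₀ : ℤ) : ℝ) with hsσ
  set sc : ℝ := ((Equiv.Perm.sign c : ℤ) : ℝ) with hsc
  have hsσ1 : sσ * sσ = 1 := by
    rcases Int.units_eq_one_or (Equiv.Perm.sign σ₀) with h | h <;> rw [hsσ, h] <;> norm_num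
  have hsτ : ((Equiv.Perm.sign τ : ℤ) : ℝ) = sσ * sc := by
    have h1 : Equiv.Perm.sign τ = Equiv.Perm.sign σ₀ * Equiv.Perm.sign c := by
      rw [hτ, Equiv.Perm.sign_mul, Equiv.Perm.sign_inv]
    rw [h1]; push_cast; ring
  have hscval : sc = -(-1 : ℝ) ^ L.length := by
    rw [hsc, hsignc]; push_cast; ring
  -- pair up the in-cycle factors
  set x : Fin n → ℝ := fun i => (d (f i) * A (f i) (σ₀ i)) * (d i * A i (σ₀ i)) with hx
  have hxneg : ∀ i ∈ T, x i < 0 := fun i hi => hf i (hdT i hi)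
  have hpair : ∀ i ∈ T, A i (σ₀ i) * A (f i) (σ₀ i) = (d i * d (f i)) * x i := by
    intro i hi
    have h1 := hdd i (hdT i hi)
    have h2 := hdd (f i) (hfS i (hdT i hi))
    calc A i (σ₀ i) * A (f i) (σ₀ i)
        = (d i * d i) * ((d (f i) * d (f i)) * (A i (σ₀ i) * A (f i) (σ₀ i))) := by
          rw [h1, h2]; ring
      _ = (d i * d (f i)) * x i := by rw [hx]; ring
  set D : ℝ := ∏ i ∈ T, (d i * d (f i)) with hD
  set Q : ℝ := ∏ i ∈ T, x i with hQ
  have hPP : Pin * Pin' = D * Q := by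
    rw [hPin, hPin', hD, hQ, ← Finset.prod_mul_distrib, ← Finset.prod_mul_distrib]
    exact Finset.prod_congr rfl hpair
  have hDpos : 0 < D := by
    have hDval : D = (∏ i ∈ T, d i) * ∏ i ∈ T, d i := by
      rw [hD, Finset.prod_mul_distrib]
      congr 1
      rw [hre d]
      exact Finset.prod_congr rfl fun i hi => by rw [hcT i hi]
    have hne : (∏ i ∈ T, d i) ≠ 0 := Finset.prod_ne_zero_iff.mpr hdT
    rw [hDval]
    exact mul_self_pos.mpr hne
  have hQsign : 0 < (-1 : ℝ) ^ L.length * Q := by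
    rw [hQ, ← hcardT]
    exact prodNegSign12 T x hxneg
  have hscQ : sc * Q < 0 := by
    rw [hscval]
    nlinarith
  have hPoutsq : 0 < Pout * Pout := mul_self_pos.mpr hPoutne
  have hEq : t σ₀ * t τ = (sσ * sσ) * (sc * ((Pin * Pin') * (Pout * Pout))) := by
    rw [ht]
    simp only
    rw [← hsσ, hsτ, hP, hP']
    ring
  have hfinal : t σ₀ * t τ < 0 := by
    rw [hEq, hsσ1, hPP, one_mul]
    calc sc * ((D * Q) * (Pout * Pout))
        = (sc * Q) * (D * (Pout * Pout)) := by ring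
      _ < 0 := mul_neg_of_neg_of_pos hscQ (mul_pos hDpos hPoutsq)
  linarith
end

section
/- Let G be a nontrivial group generated by x₁, …, xₙ, and suppose there are relators r₁, …, rₙ (words equal to 1 in G) such that: for every assignment of signs d₁, …, dₙ ∈ {−1, 0, +1}, not all zero, some relator rⱼ, when each occurrence of xᵢ^{±1} is replaced by the sign ±dᵢ, becomes a word whose letter-signs are all ≥ 0 with at least one > 0, or all ≤ 0 with at least one < 0. Then G is not left-orderable. -/
/-- Suppose a nontrivial group G is generated by x₁,…,xₙ with relators
r₁,…,rₙ (words in the generators, encoded as lists of pairs (index, Bool) where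
the Bool records the exponent sign) each equal to 1 in G. If for every
assignment of signs dᵢ ∈ {-1,0,1}, not all zero, some relator becomes a word
whose letter-signs are all ≥ 0 with at least one > 0, or all ≤ 0 with at least
one < 0, then G is not left-orderable. -/
theorem stmt_13 {G : Type*} [Group G] [Nontrivial G] {n : ℕ}
    (x : Fin n → G) (hgen : Subgroup.closure (Set.range x) = ⊤)
    (r : Fin n → List (Fin n × Bool))
    (hrel : ∀ j, ((r j).map fun p => if p.2 then x p.1 else (x p.1)⁻¹).prod = 1)
    (hobst : ∀ d : Fin n → ℤ, (∀ i, d i = -1 ∨ d i = 0 ∨ d i = 1) →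
      (∃ i, d i ≠ 0) →
      ∃ j, ((∀ p ∈ r j, 0 ≤ (if p.2 then d p.1 else -d p.1)) ∧
              (∃ p ∈ r j, 0 < (if p.2 then d p.1 else -d p.1))) ∨
           ((∀ p ∈ r j, (if p.2 then d p.1 else -d p.1) ≤ 0) ∧
              (∃ p ∈ r j, (if p.2 then d p.1 else -d p.1) < 0))) :
    ¬ ∃ lt : G → G → Prop, IsStrictTotalOrder G lt ∧
        ∀ k g h : G, lt g h → lt (k * g) (k * h) := by
  rintro ⟨lt, hsto, hinv⟩
  classical
  have tri : ∀ a b : G, lt a b ∨ a = b ∨ lt b a := fun a b =>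
    if h1 : lt a b then Or.inl h1 else if h2 : lt b a then Or.inr (Or.inr h2)
    else Or.inr (Or.inl (hsto.trichotomous a b h1 h2))
  have tr : ∀ {a b c : G}, lt a b → lt b c → lt a c :=
    fun h1 h2 => hsto.trans _ _ _ h1 h2
  have irr : ∀ a : G, ¬ lt a a := hsto.irrefl
  have asymm : ∀ {a b : G}, lt a b → ¬ lt b a :=
    fun h1 h2 => irr _ (tr h1 h2)
  have hinvp : ∀ a : G, lt 1 a → lt a⁻¹ 1 := by
    intro a h
    have := hinv a⁻¹ 1 a h
    simpa using this
  have hinvn : ∀ a : G, lt a 1 → lt 1 a⁻¹ := by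
    intro a h
    have := hinv a⁻¹ a 1 h
    simpa using this
  -- products of nonnegatives
  have hmul_nonneg : ∀ a b : G, ¬ lt a 1 → ¬ lt b 1 → ¬ lt (a * b) 1 := by
    intro a b ha hb hab
    have h1 := hinv a⁻¹ (a * b) 1 hab
    simp only [inv_mul_cancel_left, mul_one] at h1
    rcases tri a 1 with h | h | h
    · exact ha h
    · subst h; exact hb (by simpa using hab)
    · exact hb (tr h1 (hinvp a h))
  have hmul_pos : ∀ a b : G, ¬ lt a 1 → ¬ lt b 1 → (lt 1 a ∨ lt 1 b) →
      lt 1 (a * b) := by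
    intro a b ha hb hor
    rcases hor with h | h
    · rcases tri b 1 with hb' | hb' | hb'
      · exact absurd hb' hb
      · subst hb'; simpa using h
      · have := hinv a 1 b hb'
        simp only [mul_one] at this
        exact tr h this
    · have := hinv a 1 b h
      simp only [mul_one] at this
      rcases tri a 1 with ha' | ha' | ha'
      · exact absurd ha' ha
      · subst ha'; simpa using h
      · exact tr ha' this
  have hmul_nonpos : ∀ a b : G, ¬ lt 1 a → ¬ lt 1 b → ¬ lt 1 (a * b) := by
    intro a b ha hb hab
    have h1 := hinv a⁻¹ 1 (a * b) hab
    simp only [inv_mul_cancel_left, mul_one] at h1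
    rcases tri a 1 with h | h | h
    · exact hb (tr (hinvn a h) h1)
    · subst h; simp at h1; exact hb h1
    · exact ha h
  have hmul_neg : ∀ a b : G, ¬ lt 1 a → ¬ lt 1 b → (lt a 1 ∨ lt b 1) →
      lt (a * b) 1 := by
    intro a b ha hb hor
    rcases hor with h | h
    · rcases tri b 1 with hb' | hb' | hb'
      · have := hinv a b 1 hb'
        simp only [mul_one] at this
        exact tr this h
      · subst hb'; simpa using h
      · exact absurd hb' hb
    · have := hinv a b 1 h
      simp only [mul_one] at this
      rcases tri a 1 with ha' | ha' | ha'
      · exact tr this ha'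
      · subst ha'; simpa using h
      · exact absurd ha' ha
  -- list lemmas
  have key_pos : ∀ l : List G, (∀ e ∈ l, ¬ lt e 1) →
      ¬ lt l.prod 1 ∧ ((∃ e ∈ l, lt 1 e) → lt 1 l.prod) := by
    intro l
    induction l with
    | nil =>
      intro _
      refine ⟨by simpa using irr 1, ?_⟩
      rintro ⟨e, he, _⟩
      simp at he
    | cons a t ih =>
      intro h
      have ha := h a List.mem_cons_self
      have ht : ∀ e ∈ t, ¬ lt e 1 := fun e he => h e (List.mem_cons_of_mem _ he)
      obtain ⟨ht1, ht2⟩ := ih ht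
      rw [List.prod_cons]
      refine ⟨hmul_nonneg a t.prod ha ht1, ?_⟩
      rintro ⟨e, he, hlt⟩
      rcases List.mem_cons.mp he with he' | he'
      · exact hmul_pos a t.prod ha ht1 (Or.inl (he' ▸ hlt))
      · exact hmul_pos a t.prod ha ht1 (Or.inr (ht2 ⟨e, he', hlt⟩))
  have key_neg : ∀ l : List G, (∀ e ∈ l, ¬ lt 1 e) →
      ¬ lt 1 l.prod ∧ ((∃ e ∈ l, lt e 1) → lt l.prod 1) := by
    intro l
    induction l with
    | nil =>
      intro _
      refine ⟨by simpa using irr 1, ?_⟩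
      rintro ⟨e, he, _⟩
      simp at he
    | cons a t ih =>
      intro h
      have ha := h a List.mem_cons_self
      have ht : ∀ e ∈ t, ¬ lt 1 e := fun e he => h e (List.mem_cons_of_mem _ he)
      obtain ⟨ht1, ht2⟩ := ih ht
      rw [List.prod_cons]
      refine ⟨hmul_nonpos a t.prod ha ht1, ?_⟩
      rintro ⟨e, he, hlt⟩
      rcases List.mem_cons.mp he with he' | he'
      · exact hmul_neg a t.prod ha ht1 (Or.inl (he' ▸ hlt))
      · exact hmul_neg a t.prod ha ht1 (Or.inr (ht2 ⟨e, he', hlt⟩))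
  -- define signs
  set d : Fin n → ℤ := fun i => if lt 1 (x i) then 1 else if lt (x i) 1 then -1 else 0
    with hd_def
  have hdvals : ∀ i, d i = -1 ∨ d i = 0 ∨ d i = 1 := by
    intro i
    simp only [hd_def]
    split_ifs <;> simp
  have hdgt : ∀ i, lt 1 (x i) → d i = 1 := by
    intro i h; simp only [hd_def]; rw [if_pos h]
  have hdlt : ∀ i, lt (x i) 1 → d i = -1 := by
    intro i h
    simp only [hd_def]
    rw [if_neg (asymm h), if_pos h]
  have hd0 : ∀ i, d i = 0 → x i = 1 := by
    intro i h
    rcases tri (x i) 1 with hh | hh | hh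
    · rw [hdlt i hh] at h; exact absurd h (by norm_num)
    · exact hh
    · rw [hdgt i hh] at h; exact absurd h (by norm_num)
  have hd1 : ∀ i, 0 < d i → lt 1 (x i) := by
    intro i h
    rcases tri (x i) 1 with hh | hh | hh
    · rw [hdlt i hh] at h; norm_num at h
    · simp only [hd_def, hh] at h
      rw [if_neg (irr 1), if_neg (irr 1)] at h
      norm_num at h
    · exact hh
  have hdm : ∀ i, d i < 0 → lt (x i) 1 := by
    intro i h
    rcases tri (x i) 1 with hh | hh | hh
    · exact hh
    · simp only [hd_def, hh] at h
      rw [if_neg (irr 1), if_neg (irr 1)] at h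
      norm_num at h
    · rw [hdgt i hh] at h; norm_num at h
  -- not all zero
  have hne : ∃ i, d i ≠ 0 := by
    by_contra hc
    push_neg at hc
    have hx1 : ∀ i, x i = 1 := fun i => hd0 i (hc i)
    have hle : (⊤ : Subgroup G) ≤ ⊥ := by
      rw [← hgen]
      refine (Subgroup.closure_le _).mpr ?_
      rintro g ⟨i, rfl⟩
      simp [hx1 i]
    obtain ⟨a, b, hab⟩ := exists_pair_ne G
    have ha : a = 1 := Subgroup.mem_bot.mp (hle (Subgroup.mem_top a))
    have hb : b = 1 := Subgroup.mem_bot.mp (hle (Subgroup.mem_top b))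
    exact hab (ha.trans hb.symm)
  obtain ⟨j, hj⟩ := hobst d hdvals hne
  set y : Fin n × Bool → G := fun p => if p.2 then x p.1 else (x p.1)⁻¹ with hy_def
  -- letter sign facts
  have hsnn : ∀ p : Fin n × Bool, 0 ≤ (if p.2 then d p.1 else -d p.1) → ¬ lt (y p) 1 := by
    rintro ⟨i, b⟩ hs hylt
    cases b with
    | true =>
      simp only [if_pos] at hs
      simp only [hy_def, if_pos] at hylt
      rw [hdlt i hylt] at hs; norm_num at hs
    | false =>
      simp only [Bool.false_eq_true, if_neg, not_false_iff] at hs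
      simp only [hy_def, Bool.false_eq_true, if_neg, not_false_iff] at hylt
      have : lt 1 (x i) := by
        have := hinvn _ hylt
        simpa using this
      rw [hdgt i this] at hs; norm_num at hs
  have hsp : ∀ p : Fin n × Bool, 0 < (if p.2 then d p.1 else -d p.1) → lt 1 (y p) := by
    rintro ⟨i, b⟩ hs
    cases b with
    | true =>
      simp only [if_pos] at hs
      simp only [hy_def, if_pos]
      exact hd1 i hs
    | false =>
      simp only [Bool.false_eq_true, if_neg, not_false_iff] at hs
      simp only [hy_def, Bool.false_eq_true, if_neg, not_false_iff]
      exact hinvn _ (hdm i (by linarith))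
  have hsnp : ∀ p : Fin n × Bool, (if p.2 then d p.1 else -d p.1) ≤ 0 → ¬ lt 1 (y p) := by
    rintro ⟨i, b⟩ hs hylt
    cases b with
    | true =>
      simp only [if_pos] at hs
      simp only [hy_def, if_pos] at hylt
      rw [hdgt i hylt] at hs; norm_num at hs
    | false =>
      simp only [Bool.false_eq_true, if_neg, not_false_iff] at hs
      simp only [hy_def, Bool.false_eq_true, if_neg, not_false_iff] at hylt
      have : lt (x i) 1 := by
        have := hinvp _ hylt
        simpa using this
      rw [hdlt i this] at hs; norm_num at hs
  have hsn : ∀ p : Fin n × Bool, (if p.2 then d p.1 else -d p.1) < 0 → lt (y p) 1 := by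
    rintro ⟨i, b⟩ hs
    cases b with
    | true =>
      simp only [if_pos] at hs
      simp only [hy_def, if_pos]
      exact hdm i hs
    | false =>
      simp only [Bool.false_eq_true, if_neg, not_false_iff] at hs
      simp only [hy_def, Bool.false_eq_true, if_neg, not_false_iff]
      exact hinvp _ (hd1 i (by linarith))
  have hprod : ((r j).map y).prod = 1 := hrel j
  rcases hj with ⟨hall, p, hp, hplt⟩ | ⟨hall, p, hp, hplt⟩
  · have h1 : ∀ e ∈ (r j).map y, ¬ lt e 1 := by
      intro e he
      obtain ⟨q, hq, rfl⟩ := List.mem_map.mp he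
      exact hsnn q (hall q hq)
    have h2 := (key_pos _ h1).2 ⟨y p, List.mem_map_of_mem hp, hsp p hplt⟩
    rw [hprod] at h2
    exact irr 1 h2
  · have h1 : ∀ e ∈ (r j).map y, ¬ lt 1 e := by
      intro e he
      obtain ⟨q, hq, rfl⟩ := List.mem_map.mp he
      exact hsnp q (hall q hq)
    have h2 := (key_neg _ h1).2 ⟨y p, List.mem_map_of_mem hp, hsn p hplt⟩
    rw [hprod] at h2
    exact irr 1 h2
end

section
/- Let G be a finite bipartite graph on vertex classes A, B with |A| = |B| = n, suppose G has a unique perfect matching μ, and orient each edge of μ from A to B and each non-matching edge from B to A. Then the resulting directed graph contains no directed cycle. -/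
/-- The orientation associated to a perfect matching μ of a bipartite graph:
matched edges point from A (left) to B (right), unmatched edges from B to A. -/
def matchingOrientation {n : ℕ} (Adj : Fin n → Fin n → Prop) (μ : Fin n ≃ Fin n) :
    (Fin n ⊕ Fin n) → (Fin n ⊕ Fin n) → Prop
  | Sum.inl a, Sum.inr b => Adj a b ∧ b = μ a
  | Sum.inr b, Sum.inl a => Adj a b ∧ b ≠ μ a
  | _, _ => False

section Aux

variable {n : ℕ} {Adj : Fin n → Fin n → Prop} {μ : Fin n ≃ Fin n}

lemma mo_cases {x y : Fin n ⊕ Fin n} (h : matchingOrientation Adj μ x y) :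
    (∃ a, x = Sum.inl a ∧ y = Sum.inr (μ a)) ∨
    (∃ a b, x = Sum.inr b ∧ y = Sum.inl a ∧ Adj a b ∧ b ≠ μ a) := by
  match x, y with
  | Sum.inl a, Sum.inr b =>
      have h' : Adj a b ∧ b = μ a := h
      exact Or.inl ⟨a, rfl, by rw [h'.2]⟩
  | Sum.inr b, Sum.inl a =>
      have h' : Adj a b ∧ b ≠ μ a := h
      exact Or.inr ⟨a, b, rfl, rfl, h'⟩
  | Sum.inl _, Sum.inl _ => exact False.elim h
  | Sum.inr _, Sum.inr _ => exact False.elim h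

/-- Rotate a closed walk so that it starts at a left vertex. -/
lemma mo_rot (k : ℕ) (v : ℕ → Fin n ⊕ Fin n) (hk : 0 < k) (hc : v k = v 0)
    (hs : ∀ i < k, matchingOrientation Adj μ (v i) (v (i + 1))) :
    ∃ (w : ℕ → Fin n ⊕ Fin n) (a0 : Fin n), w 0 = Sum.inl a0 ∧ w k = w 0 ∧
      ∀ i < k, matchingOrientation Adj μ (w i) (w (i + 1)) := by
  rcases hv0 : v 0 with a0 | b0
  · exact ⟨v, a0, hv0, hc, hs⟩
  · have h01 := hs 0 hk
    rcases mo_cases h01 with ⟨a, ha, _⟩ | ⟨a, b, _, ha1, _⟩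
    · rw [hv0] at ha; exact absurd ha (by simp)
    · refine ⟨fun i => if i = k then v 1 else v (i + 1), a, ?_, ?_, ?_⟩
      · show (if (0 : ℕ) = k then v 1 else v (0 + 1)) = Sum.inl a
        rw [if_neg (by omega : ¬ (0 : ℕ) = k), ha1]
      · show (if k = k then v 1 else v (k + 1)) = (if (0 : ℕ) = k then v 1 else v (0 + 1))
        rw [if_pos rfl, if_neg (by omega : ¬ (0 : ℕ) = k)]
      · intro i hi
        simp only [if_neg hi.ne]
        by_cases hik : i + 1 = k
        · simp only [if_pos hik]
          rw [hik, hc]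
          exact hs 0 hk
        · simp only [if_neg hik]
          exact hs (i + 1) (by omega)

end Aux

/-- If a finite bipartite graph has a unique perfect matching μ, then the
directed graph obtained by orienting matched edges from A to B and all other
edges from B to A contains no directed cycle. -/
theorem stmt_17 {n : ℕ} (Adj : Fin n → Fin n → Prop)
    (μ : Fin n ≃ Fin n) (hμ : ∀ a, Adj a (μ a))
    (huniq : ∀ ν : Fin n ≃ Fin n, (∀ a, Adj a (ν a)) → ν = μ) :
    ¬ ∃ (k : ℕ) (v : ℕ → Fin n ⊕ Fin n), 0 < k ∧ v k = v 0 ∧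
        ∀ i < k, matchingOrientation Adj μ (v i) (v (i + 1)) := by
  classical
  rintro ⟨k0, v0, hk0, hc0, hs0⟩
  have hP : ∃ k, 0 < k ∧ ∃ (v : ℕ → Fin n ⊕ Fin n) (a0 : Fin n),
      v 0 = Sum.inl a0 ∧ v k = v 0 ∧
      ∀ i < k, matchingOrientation Adj μ (v i) (v (i + 1)) :=
    ⟨k0, hk0, mo_rot k0 v0 hk0 hc0 hs0⟩
  set k := Nat.find hP with hkdef
  obtain ⟨hkpos, v, a0, hv0, hvc, hvs⟩ := Nat.find_spec hP
  -- minimality gives injectivity on the cycle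
  have hinj : ∀ i j, i < j → j ≤ k → ¬(i = 0 ∧ j = k) → v i ≠ v j := by
    intro i j hij hjk hne heq
    have hd : 0 < j - i := by omega
    have hdk : j - i < k := by omega
    have hcyc : ∃ (w : ℕ → Fin n ⊕ Fin n) (a0 : Fin n),
        w 0 = Sum.inl a0 ∧ w (j - i) = w 0 ∧
        ∀ t < j - i, matchingOrientation Adj μ (w t) (w (t + 1)) := by
      apply mo_rot (j - i) (fun t => v (i + t)) hd
      · show v (i + (j - i)) = v (i + 0)
        rw [Nat.add_sub_cancel' hij.le]
        exact heq.symm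
      · intro t ht
        exact hvs (i + t) (by omega)
    exact Nat.find_min hP hdk ⟨hd, hcyc⟩
  -- parity
  have hpar : ∀ i ≤ k, (Even i → ∃ a, v i = Sum.inl a) ∧
      (¬ Even i → ∃ b, v i = Sum.inr b) := by
    intro i
    induction i with
    | zero => exact fun _ => ⟨fun _ => ⟨a0, hv0⟩, fun h => absurd Even.zero h⟩
    | succ i ih =>
      intro hik
      obtain ⟨ihl, ihr⟩ := ih (by omega)
      have hedge := hvs i (by omega)
      constructor
      · intro he
        have hio : ¬ Even i := by rw [Nat.even_add_one] at he; exact fun h => he h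
        obtain ⟨b, hb⟩ := ihr hio
        rcases mo_cases hedge with ⟨a, ha, _⟩ | ⟨a, b', _, ha1, _⟩
        · rw [hb] at ha; exact absurd ha (by simp)
        · exact ⟨a, ha1⟩
      · intro he
        have hio : Even i := by rw [Nat.even_add_one, not_not] at he; exact he
        obtain ⟨c, hcc⟩ := ihl hio
        rcases mo_cases hedge with ⟨a, _, hy⟩ | ⟨a, b', hx, _, _⟩
        · exact ⟨μ a, hy⟩
        · rw [hcc] at hx; exact absurd hx (by simp)
  have hkeven : Even k := by
    by_contra hko
    obtain ⟨b, hb⟩ := (hpar k le_rfl).2 hko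
    rw [hvc, hv0] at hb
    exact absurd hb (by simp)
  obtain ⟨m, hm⟩ := hkeven
  have hmpos : 0 < m := by omega
  set A : ℕ → Fin n := fun j => Sum.elim id (fun _ => a0) (v (2 * j)) with hA
  have F1 : ∀ j ≤ m, v (2 * j) = Sum.inl (A j) := by
    intro j hj
    obtain ⟨c, hc⟩ := (hpar (2 * j) (by omega)).1 ⟨j, two_mul j⟩
    rw [hA]
    simp only []
    rw [hc]
    rfl
  have F2 : ∀ j < m, v (2 * j + 1) = Sum.inr (μ (A j)) := by
    intro j hj
    have hedge := hvs (2 * j) (by omega)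
    rcases mo_cases hedge with ⟨a, ha, hy⟩ | ⟨a, b, hx, _, _⟩
    · rw [F1 j (by omega)] at ha
      obtain rfl : A j = a := by simpa using ha
      exact hy
    · rw [F1 j (by omega)] at hx
      exact absurd hx (by simp)
  have F3 : ∀ j < m, Adj (A (j + 1)) (μ (A j)) ∧ μ (A j) ≠ μ (A (j + 1)) := by
    intro j hj
    have hedge := hvs (2 * j + 1) (by omega)
    have h2 : v (2 * j + 1 + 1) = Sum.inl (A (j + 1)) := by
      rw [show 2 * j + 1 + 1 = 2 * (j + 1) by ring]
      exact F1 (j + 1) (by omega)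
    rcases mo_cases hedge with ⟨a, ha, _⟩ | ⟨a, b, hx, hy, hadj, hne⟩
    · rw [F2 j hj] at ha; exact absurd ha (by simp)
    · rw [F2 j hj] at hx
      obtain rfl : b = μ (A j) := by simpa using hx.symm
      rw [h2] at hy
      obtain rfl : a = A (j + 1) := by simpa using hy.symm
      exact ⟨hadj, hne⟩
  have ham : A m = A 0 := by
    have h1 := F1 m le_rfl
    have h0 := F1 0 (by omega)
    rw [show 2 * m = k by omega, hvc] at h1
    rw [show 2 * 0 = 0 by ring] at h0
    rw [h0] at h1
    simpa using h1.symm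
  have F4 : ∀ i j, i < m → j < m → A i = A j → i = j := by
    have key : ∀ i j, i < j → j < m → A i ≠ A j := by
      intro i j hij hj heq
      have := hinj (2 * i) (2 * j) (by omega) (by omega) (by omega)
      rw [F1 i (by omega), F1 j (by omega), heq] at this
      exact this rfl
    intro i j hi hj heq
    rcases Nat.lt_trichotomy i j with h | h | h
    · exact absurd heq (key i j h hj)
    · exact h
    · exact absurd heq.symm (key j i h hi)
  -- the list of left vertices along the cycle
  set l : List (Fin n) := (List.range m).map A with hl
  have hlen : l.length = m := by simp [hl]
  have hnodup : l.Nodup := by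
    refine List.Nodup.map_on ?_ List.nodup_range
    intro x hx y hy h
    exact F4 x y (List.mem_range.mp hx) (List.mem_range.mp hy) h
  set σ : Equiv.Perm (Fin n) := l.formPerm with hσdef
  have hσ : ∀ j < m, σ (A j) = A ((j + 1) % m) := by
    intro j hj
    have := List.formPerm_apply_getElem l hnodup j (by omega)
    simpa [hl, hlen, Nat.mod_lt _ hmpos] using this
  have F3' : ∀ j < m, Adj (A ((j + 1) % m)) (μ (A j)) := by
    intro j hj
    by_cases hjm : j + 1 = m
    · rw [show (j + 1) % m = 0 by rw [hjm]; exact Nat.mod_self m]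
      rw [← ham, ← hjm]
      exact (F3 j hj).1
    · rw [Nat.mod_eq_of_lt (by omega)]
      exact (F3 j hj).1
  have hadjν : ∀ x, Adj x ((σ.symm.trans μ) x) := by
    intro x
    show Adj x (μ (σ.symm x))
    by_cases hx : x ∈ l
    · obtain ⟨i, hi, hix⟩ := List.mem_map.mp hx
      rw [List.mem_range] at hi
      obtain ⟨j, hjm, hji⟩ : ∃ j, j < m ∧ (j + 1) % m = i := by
        rcases eq_or_ne i 0 with h | h
        · refine ⟨m - 1, by omega, ?_⟩
          rw [Nat.sub_add_cancel hmpos, Nat.mod_self, h]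
        · refine ⟨i - 1, by omega, ?_⟩
          rw [Nat.sub_add_cancel (by omega), Nat.mod_eq_of_lt hi]
      have hσj : σ (A j) = x := by rw [hσ j hjm, hji, hix]
      have hsx : σ.symm x = A j := by rw [← hσj, Equiv.symm_apply_apply]
      rw [hsx, ← hix, ← hji]
      exact F3' j hjm
    · have hfix : σ x = x := List.formPerm_apply_of_notMem hx
      have hsx : σ.symm x = x := (Equiv.symm_apply_eq σ).mpr hfix.symm
      rw [hsx]
      exact hμ x
  have hν := huniq (σ.symm.trans μ) hadjν
  have hσsymm : σ.symm = 1 :=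
    Equiv.ext fun x => μ.injective (DFunLike.congr_fun hν x)
  have hσ1 : σ = 1 := by
    rw [← Equiv.symm_symm σ, hσsymm]
    rfl
  by_cases hm1 : m = 1
  · exact (F3 0 hmpos).2 (congrArg μ (by rw [← ham, hm1]))
  · have h01 : σ (A 0) = A 1 := by
      have := hσ 0 hmpos
      rwa [Nat.mod_eq_of_lt (by omega)] at this
    rw [hσ1] at h01
    have : (0 : ℕ) = 1 := F4 0 1 hmpos (by omega) (by simpa using h01)
    exact absurd this (by omega)
end
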